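/- arXiv:1206.6498 — 9 statements merged into one kernel-verified Lean document; each statement's English description precedes it below -/
import Mathlib

section
/- Let q, z, c ∈ ℂ with q ≠ 0, q⁴ ≠ 1, z ≠ 0 and c ≠ z. Define the 2×2 matrices D = diag(q⁻², q²), M⁺(x) = (x − c)·E₂₁ and M⁻(x) = (x⁻¹ − c)·E₁₂. Then a 2×2 complex matrix K satisfies the three intertwining equations D·K = K·D, M⁺(1/z)·K = K·M⁺(z), and M⁻(1/z)·K = K·M⁻(z) if and only if K is a complex scalar multiple of diag(1, (cz−1)/(z(c−z))). -/
open Matrix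

/-- `diag(q⁻², q²)`, the image of the Cartan element `k₀k₁⁻¹`. -/
noncomputable def Dm (q : ℂ) : Matrix (Fin 2) (Fin 2) ℂ := !![(q ^ 2)⁻¹, 0; 0, q ^ 2]

/-- `M⁺(x) = (x − c)·E₂₁`. -/
noncomputable def Mp (c x : ℂ) : Matrix (Fin 2) (Fin 2) ℂ := (x - c) • !![0, 0; 1, 0]

/-- `M⁻(x) = (x⁻¹ − c)·E₁₂`. -/
noncomputable def Mm (c x : ℂ) : Matrix (Fin 2) (Fin 2) ℂ := (x⁻¹ - c) • !![0, 1; 0, 0]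

/-- A 2×2 matrix intertwines the generators of the singlet-boundary coideal
subalgebra of `U_q(sl2hat)` iff it is a scalar multiple of
`diag(1, (cz−1)/(z(c−z)))`. -/
theorem stmt3 (q z c : ℂ) (hq : q ≠ 0) (hq4 : q ^ 4 ≠ 1) (hz : z ≠ 0) (hc : c ≠ z)
    (K : Matrix (Fin 2) (Fin 2) ℂ) :
    (Dm q * K = K * Dm q ∧ Mp c (1 / z) * K = K * Mp c z ∧
        Mm c (1 / z) * K = K * Mm c z) ↔
      ∃ lam : ℂ, K = lam • !![1, 0; 0, (c * z - 1) / (z * (c - z))] := by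
  have hcz : c - z ≠ 0 := sub_ne_zero.mpr hc
  have hq2 : (q : ℂ) ^ 2 ≠ 0 := pow_ne_zero _ hq
  have hq4' : q ^ 4 - 1 ≠ 0 := sub_ne_zero.mpr hq4
  constructor
  · rintro ⟨h1, h2, h3⟩
    have e01 := congrFun (congrFun h1 0) 1
    have e10 := congrFun (congrFun h1 1) 0
    have e2 := congrFun (congrFun h2 1) 0
    simp [Dm, Mp, Mm, Matrix.mul_apply, Fin.sum_univ_succ] at e01 e10 e2
    have hb : K 0 1 = 0 := by
      have h4 : K 0 1 * (q ^ 4 - 1) = 0 := by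
        field_simp at e01
        linear_combination -e01
      exact (mul_eq_zero.mp h4).resolve_right hq4'
    have hcc : K 1 0 = 0 := by
      have h4 : K 1 0 * (q ^ 4 - 1) = 0 := by
        field_simp at e10
        linear_combination e10
      exact (mul_eq_zero.mp h4).resolve_right hq4'
    refine ⟨K 0 0, ?_⟩
    ext i j
    fin_cases i <;> fin_cases j <;>
      simp [hb, hcc]
    -- remaining: K 1 1 = K 0 0 * ((c*z-1)/(z*(c-z)))
    field_simp
    field_simp at e2
    linear_combination e2
  · rintro ⟨lam, rfl⟩
    refine ⟨?_, ?_, ?_⟩ <;>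
      · ext i j
        fin_cases i <;> fin_cases j <;>
          simp [Dm, Mp, Mm, Matrix.mul_apply, Fin.sum_univ_succ] <;>
          · field_simp
            try ring
end

section
/- Let q ∈ ℂ with q ≠ 0 and q⁴ ≠ 1. A 4×4 complex matrix K commutes with all three matrices diag(q², 1, 1, q⁻²), q·E₁₂ + E₁₃ + E₂₄ + q⁻¹·E₃₄, and E₂₁ + q⁻¹·E₃₁ + q·E₄₂ + E₄₃ if and only if K = a·I₄ + k·(−q⁻¹·E₂₂ + E₂₃ + E₃₂ − q·E₃₃) for some a, k ∈ ℂ. -/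
open Matrix

private lemma auxz (x c : ℂ) (hc : c ≠ 1) (h : c * x = x) : x = 0 := by
  by_contra hx
  exact hc (mul_right_cancel₀ hx (by rw [h, one_mul]))

set_option maxHeartbeats 1000000 in
/-- A 4×4 matrix commutes with the represented coproducts of the Lie generators
`k₁, ξ₁⁺, ξ₁⁻` of `U_q(sl2hat)` iff it has the stated two-parameter form. -/
theorem stmt4 (q : ℂ) (hq : q ≠ 0) (hq4 : q ^ 4 ≠ 1)
    (K : Matrix (Fin 4) (Fin 4) ℂ) :
    (K * !![q ^ 2, 0, 0, 0; 0, 1, 0, 0; 0, 0, 1, 0; 0, 0, 0, (q ^ 2)⁻¹] =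
        !![q ^ 2, 0, 0, 0; 0, 1, 0, 0; 0, 0, 1, 0; 0, 0, 0, (q ^ 2)⁻¹] * K ∧
      K * !![0, q, 1, 0; 0, 0, 0, 1; 0, 0, 0, q⁻¹; 0, 0, 0, 0] =
        !![0, q, 1, 0; 0, 0, 0, 1; 0, 0, 0, q⁻¹; 0, 0, 0, 0] * K ∧
      K * !![0, 0, 0, 0; 1, 0, 0, 0; q⁻¹, 0, 0, 0; 0, q, 1, 0] =
        !![0, 0, 0, 0; 1, 0, 0, 0; q⁻¹, 0, 0, 0; 0, q, 1, 0] * K) ↔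
      ∃ a k : ℂ, K = a • (1 : Matrix (Fin 4) (Fin 4) ℂ) +
        k • !![0, 0, 0, 0; 0, -q⁻¹, 1, 0; 0, 1, -q, 0; 0, 0, 0, 0] := by
  have hq2 : q ^ 2 ≠ 0 := pow_ne_zero _ hq
  have hq21 : q ^ 2 ≠ 1 := fun h => hq4 (by rw [show (4:ℕ) = 2*2 from rfl, pow_mul, h, one_pow])
  have hq2i1 : (q ^ 2)⁻¹ ≠ 1 := fun h => hq21 (by rwa [inv_eq_one] at h)
  have hq2p1 : q ^ 2 + 1 ≠ 0 := fun h => hq4 (by linear_combination (q^2 - 1) * h)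
  constructor
  · rintro ⟨h1, h2, -⟩
    have e1 := fun i j => congrFun (congrFun h1 i) j
    have e2 := fun i j => congrFun (congrFun h2 i) j
    simp only [Matrix.mul_apply, Fin.sum_univ_four] at e1 e2
    have z01 : K 0 1 = 0 := by
      have h := e1 0 1; simp [Matrix.vecHead, Matrix.vecTail] at h
      exact auxz _ _ hq21 h.symm
    have z02 : K 0 2 = 0 := by
      have h := e1 0 2; simp [Matrix.vecHead, Matrix.vecTail] at h
      exact auxz _ _ hq21 h.symm
    have z10 : K 1 0 = 0 := by
      have h := e1 1 0; simp [Matrix.vecHead, Matrix.vecTail] at h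
      exact auxz _ _ hq21 (by linear_combination h)
    have z20 : K 2 0 = 0 := by
      have h := e1 2 0; simp [Matrix.vecHead, Matrix.vecTail] at h
      exact auxz _ _ hq21 (by linear_combination h)
    have z03 : K 0 3 = 0 := by
      have h := e1 0 3; simp [Matrix.vecHead, Matrix.vecTail] at h
      field_simp at h
      exact auxz _ _ hq4 (by linear_combination -h)
    have z30 : K 3 0 = 0 := by
      have h := e1 3 0; simp [Matrix.vecHead, Matrix.vecTail] at h
      field_simp at h
      exact auxz _ _ hq4 (by linear_combination h)
    have z13 : K 1 3 = 0 := by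
      have h := e1 1 3; simp [Matrix.vecHead, Matrix.vecTail] at h
      exact auxz _ _ hq2i1 (by linear_combination h)
    have z23 : K 2 3 = 0 := by
      have h := e1 2 3; simp [Matrix.vecHead, Matrix.vecTail] at h
      exact auxz _ _ hq2i1 (by linear_combination h)
    have z31 : K 3 1 = 0 := by
      have h := e1 3 1; simp [Matrix.vecHead, Matrix.vecTail] at h
      exact auxz _ _ hq2i1 (by linear_combination -h)
    have z32 : K 3 2 = 0 := by
      have h := e1 3 2; simp [Matrix.vecHead, Matrix.vecTail] at h
      exact auxz _ _ hq2i1 (by linear_combination -h)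
    have hA := e2 0 1
    have hB := e2 0 2
    have hC := e2 1 3
    have hD := e2 2 3
    simp [Matrix.vecHead, Matrix.vecTail] at hA hB hC hD
    field_simp at hC hD
    -- hA : K 0 0 * q = q * K 1 1 + K 2 1
    -- hB : K 0 0 = q * K 1 2 + K 2 2
    -- hC : K 1 1 * q + K 1 2 = K 3 3 * q
    -- hD : K 2 1 * q + K 2 2 = K 3 3
    have hK11 : q * K 1 1 = q * K 0 0 - K 1 2 := by
      refine mul_left_cancel₀ hq2p1 ?_
      linear_combination -q^2 * hA - q * hB + hC - q * hD
    have hk21 : K 2 1 = K 1 2 := by linear_combination -hA - hK11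
    have hk33 : K 3 3 = K 0 0 := by
      refine mul_left_cancel₀ hq ?_
      linear_combination -hC + hK11
    have hk22 : K 2 2 = K 0 0 - q * K 1 2 := by linear_combination -hB
    refine ⟨K 0 0, K 1 2, ?_⟩
    ext i j
    fin_cases i <;> fin_cases j <;>
      simp [Matrix.one_apply, Matrix.vecHead, Matrix.vecTail,
        z01, z02, z03, z10, z20, z30, z13, z23, z31, z32, hk21, hk33] <;>
      first
        | (field_simp; linear_combination hK11)
        | linear_combination hk22
  · rintro ⟨a, k, rfl⟩
    have h1 : (1 : Matrix (Fin 4) (Fin 4) ℂ) = !![1,0,0,0;0,1,0,0;0,0,1,0;0,0,0,1] := by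
      ext i j; fin_cases i <;> fin_cases j <;>
        simp [Matrix.one_apply, Matrix.vecHead, Matrix.vecTail]
    have hK : a • (1 : Matrix (Fin 4) (Fin 4) ℂ) +
        k • !![0, 0, 0, 0; 0, -q⁻¹, 1, 0; 0, 1, -q, 0; 0, 0, 0, 0] =
        !![a,0,0,0;0,a-k*q⁻¹,k,0;0,k,a-k*q,0;0,0,0,a] := by
      rw [h1]
      ext i j; fin_cases i <;> fin_cases j <;>
        simp [Matrix.vecHead, Matrix.vecTail] <;> ring
    refine ⟨?_, ?_, ?_⟩ <;> rw [hK] <;> ext i j <;> fin_cases i <;> fin_cases j <;>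
      simp [Matrix.mul_apply, Fin.sum_univ_four, Matrix.vecHead, Matrix.vecTail] <;>
      (try field_simp) <;> ring
end

section
/- Let q, z, s ∈ ℂ with q ≠ 0, q⁴ ≠ 1, z ≠ 0, s ≠ 0, and D := q⁻² − (s + s⁻¹)z + q²z² ≠ 0. Define the 4×4 matrix M(x) = M₂₁(x)·E₂₁ + M₃₁(x)·E₃₁ + M₄₂(x)·E₄₂ + M₄₃(x)·E₄₃ with M₂₁(x) = q⁻³(s + s⁻¹ + (1 − q⁻²)x⁻¹), M₃₁(x) = q⁻²x + q⁻⁴x⁻¹, M₄₂(x) = q⁻²x + x⁻¹, and M₄₃(x) = q⁻¹(s + s⁻¹) − (q − q⁻¹)x⁻¹. Then for k ∈ ℂ the matrix K = I₄ + k·(−q⁻¹·E₂₂ + E₂₃ + E₃₂ − q·E₃₃) satisfies M(1/z)·K = K·M(z) if and only if k = (q − q⁻¹)(z² − 1)/D. -/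
set_option maxHeartbeats 1000000

open Matrix

/-- The represented coproduct of the twisted affine generator `B₀⁺` of the
vector-boundary coideal subalgebra of `U_q(sl2hat)`. -/
noncomputable def Mtw (q s x : ℂ) : Matrix (Fin 4) (Fin 4) ℂ :=
  !![0, 0, 0, 0;
     (q ^ 3)⁻¹ * (s + s⁻¹ + (1 - (q ^ 2)⁻¹) * x⁻¹), 0, 0, 0;
     (q ^ 2)⁻¹ * x + (q ^ 4)⁻¹ * x⁻¹, 0, 0, 0;
     0, (q ^ 2)⁻¹ * x + x⁻¹, q⁻¹ * (s + s⁻¹) - (q - q⁻¹) * x⁻¹, 0]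

private lemma stmt5_rev (q z s k : ℂ) (hq : q ≠ 0) (hz : z ≠ 0) (hs : s ≠ 0)
    (hk : k * (s - s^2*q^2*z - q^2*z + q^4*z^2*s) = q*s*(q^2-1)*(z^2-1)) :
    Mtw q s (1 / z) *
        (1 + k • !![0, 0, 0, 0; 0, -q⁻¹, 1, 0; 0, 1, -q, 0; 0, 0, 0, 0]) =
      (1 + k • !![0, 0, 0, 0; 0, -q⁻¹, 1, 0; 0, 1, -q, 0; 0, 0, 0, 0]) *
        Mtw q s z := by
  ext i j
  fin_cases i <;> fin_cases j <;>
    simp [Mtw, Matrix.mul_apply, Fin.sum_univ_four, Matrix.one_apply]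
  · -- (1,0)
    field_simp
    ring_nf
    have hB : s*q^6*z*(s⁻¹*q⁻¹^6*z⁻¹) = 1 := by
      field_simp
    linear_combination (-1 : ℂ) * hk
  · -- (2,0)
    field_simp
    ring_nf
    try field_simp
    linear_combination hk
  · -- (3,1)
    field_simp
    ring_nf
    try field_simp
    linear_combination (-1 : ℂ) * hk
  · -- (3,2)
    field_simp
    ring_nf
    try field_simp
    linear_combination hk

/-- The K-matrix `I₄ + k·(−q⁻¹E₂₂ + E₂₃ + E₃₂ − qE₃₃)` intertwines the twisted
affine generator iff `k = (q−q⁻¹)(z²−1)/D`. -/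
theorem stmt5 (q z s k : ℂ) (hq : q ≠ 0) (hq4 : q ^ 4 ≠ 1) (hz : z ≠ 0) (hs : s ≠ 0)
    (hD : (q ^ 2)⁻¹ - (s + s⁻¹) * z + q ^ 2 * z ^ 2 ≠ 0) :
    Mtw q s (1 / z) *
        (1 + k • !![0, 0, 0, 0; 0, -q⁻¹, 1, 0; 0, 1, -q, 0; 0, 0, 0, 0]) =
      (1 + k • !![0, 0, 0, 0; 0, -q⁻¹, 1, 0; 0, 1, -q, 0; 0, 0, 0, 0]) *
        Mtw q s z ↔
      k = (q - q⁻¹) * (z ^ 2 - 1) /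
        ((q ^ 2)⁻¹ - (s + s⁻¹) * z + q ^ 2 * z ^ 2) := by
  constructor
  · intro h
    have h31 := congrArg (fun M : Matrix (Fin 4) (Fin 4) ℂ => M 3 1) h
    simp [Mtw, Matrix.mul_apply, Fin.sum_univ_four, Matrix.one_apply] at h31
    field_simp at h31
    have h2 : k * (q * (s - q^2*(s*s+1)*z + q^4*z^2*s)) = (q*q-1)*(z^2-1)*(q^2*s) := by
      apply mul_left_cancel₀ (a := -(q^3*z)) (by simp [hq, hz])
      linear_combination (q^4*z) * h31
    rw [eq_div_iff hD]
    field_simp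
    linear_combination (-1 : ℂ) * h31
  · intro h
    apply stmt5_rev q z s k hq hz hs
    have h' := (eq_div_iff hD).mp h
    field_simp at h'
    apply mul_left_cancel₀ hq
    linear_combination q * h'
end

section
/- Let u, v, a, b, c ∈ ℂ with c ≠ u, c ≠ v, u − v ≠ 1 and u + v ≠ 1. Define R(x) = [[1,0,0,0],[0,r(x),1−r(x),0],[0,1−r(x),r(x),0],[0,0,0,1]] with r(x) = x/(x−1), and for x ∈ {u, v} define K(x) = [[1, a·x/(c−x)],[b·x/(c−x), (c+x)/(c−x)]]. Then the rational reflection equation for a singlet boundary holds: R(u−v)·(K(u)⊗I₂)·R(u+v)·(I₂⊗K(v)) = (I₂⊗K(v))·R(u+v)·(K(u)⊗I₂)·R(u−v) as 4×4 complex matrices. -/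
open Matrix

def div2 (i : Fin 4) : Fin 2 := ⟨i.val / 2, by have := i.isLt; omega⟩
def mod2 (i : Fin 4) : Fin 2 := ⟨i.val % 2, by have := i.isLt; omega⟩

/-- Kronecker product of two 2×2 matrices, with lexicographic ordering of basis. -/
noncomputable def kron2 (A B : Matrix (Fin 2) (Fin 2) ℂ) : Matrix (Fin 4) (Fin 4) ℂ :=
  Matrix.of fun i j => A (div2 i) (div2 j) * B (mod2 i) (mod2 j)

/-- Rational R-matrix of the Yangian `Y(sl2)`. -/
noncomputable def Rr (x : ℂ) : Matrix (Fin 4) (Fin 4) ℂ :=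
  let r : ℂ := x / (x - 1)
  !![1, 0, 0, 0;
     0, r, 1 - r, 0;
     0, 1 - r, r, 0;
     0, 0, 0, 1]

/-- General singlet-boundary reflection matrix for `Y(sl2)`. -/
noncomputable def Kr (a b c x : ℂ) : Matrix (Fin 2) (Fin 2) ℂ :=
  !![1, a * (x / (c - x));
     b * (x / (c - x)), (c + x) / (c - x)]

@[simp] lemma div2_0 : div2 0 = 0 := rfl
@[simp] lemma div2_1 : div2 1 = 0 := rfl
@[simp] lemma div2_2 : div2 2 = 1 := rfl
@[simp] lemma div2_3 : div2 3 = 1 := rfl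
@[simp] lemma mod2_0 : mod2 0 = 0 := rfl
@[simp] lemma mod2_1 : mod2 1 = 1 := rfl
@[simp] lemma mod2_2 : mod2 2 = 0 := rfl
@[simp] lemma mod2_3 : mod2 3 = 1 := rfl

lemma kronKr_one (a b c x : ℂ) : kron2 (Kr a b c x) 1 =
    !![1, 0, a * (x / (c - x)), 0;
       0, 1, 0, a * (x / (c - x));
       b * (x / (c - x)), 0, (c + x) / (c - x), 0;
       0, b * (x / (c - x)), 0, (c + x) / (c - x)] := by
  ext i j
  fin_cases i <;> fin_cases j <;>
    simp [kron2, Kr, Matrix.one_apply, Matrix.vecHead, Matrix.vecTail]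

lemma kron_one_Kr (a b c x : ℂ) : kron2 1 (Kr a b c x) =
    !![1, a * (x / (c - x)), 0, 0;
       b * (x / (c - x)), (c + x) / (c - x), 0, 0;
       0, 0, 1, a * (x / (c - x));
       0, 0, b * (x / (c - x)), (c + x) / (c - x)] := by
  ext i j
  fin_cases i <;> fin_cases j <;>
    simp [kron2, Kr, Matrix.one_apply, Matrix.vecHead, Matrix.vecTail]

lemma Rr_eq (x : ℂ) (hx : x - 1 ≠ 0) :
    Rr x = (x - 1)⁻¹ • !![x - 1, 0, 0, 0; 0, x, -1, 0; 0, -1, x, 0; 0, 0, 0, x - 1] := by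
  unfold Rr
  ext i j
  fin_cases i <;> fin_cases j <;>
    simp [Matrix.smul_apply, Matrix.vecHead, Matrix.vecTail] <;>
    field_simp <;> ring

lemma kron1 (a b c x : ℂ) (hx : c - x ≠ 0) : kron2 (Kr a b c x) 1 =
    (c - x)⁻¹ • !![c - x, 0, a * x, 0;
       0, c - x, 0, a * x;
       b * x, 0, c + x, 0;
       0, b * x, 0, c + x] := by
  rw [kronKr_one]
  ext i j
  fin_cases i <;> fin_cases j <;>
    simp [Matrix.smul_apply, Matrix.vecHead, Matrix.vecTail] <;>
    field_simp <;> ring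

lemma kron1' (a b c x : ℂ) (hx : c - x ≠ 0) : kron2 1 (Kr a b c x) =
    (c - x)⁻¹ • !![c - x, a * x, 0, 0;
       b * x, c + x, 0, 0;
       0, 0, c - x, a * x;
       0, 0, b * x, c + x] := by
  rw [kron_one_Kr]
  ext i j
  fin_cases i <;> fin_cases j <;>
    simp [Matrix.smul_apply, Matrix.vecHead, Matrix.vecTail] <;>
    field_simp <;> ring


lemma mul_fin_four {R : Type*} [CommRing R] (a00 b00 a01 b01 a02 b02 a03 b03 a10 b10 a11 b11 a12 b12 a13 b13 a20 b20 a21 b21 a22 b22 a23 b23 a30 b30 a31 b31 a32 b32 a33 b33 : R) :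
    !![a00, a01, a02, a03;
        a10, a11, a12, a13;
        a20, a21, a22, a23;
        a30, a31, a32, a33] * !![b00, b01, b02, b03;
        b10, b11, b12, b13;
        b20, b21, b22, b23;
        b30, b31, b32, b33] =
    !![a00*b00 + a01*b10 + a02*b20 + a03*b30, a00*b01 + a01*b11 + a02*b21 + a03*b31, a00*b02 + a01*b12 + a02*b22 + a03*b32, a00*b03 + a01*b13 + a02*b23 + a03*b33;
        a10*b00 + a11*b10 + a12*b20 + a13*b30, a10*b01 + a11*b11 + a12*b21 + a13*b31, a10*b02 + a11*b12 + a12*b22 + a13*b32, a10*b03 + a11*b13 + a12*b23 + a13*b33;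
        a20*b00 + a21*b10 + a22*b20 + a23*b30, a20*b01 + a21*b11 + a22*b21 + a23*b31, a20*b02 + a21*b12 + a22*b22 + a23*b32, a20*b03 + a21*b13 + a22*b23 + a23*b33;
        a30*b00 + a31*b10 + a32*b20 + a33*b30, a30*b01 + a31*b11 + a32*b21 + a33*b31, a30*b02 + a31*b12 + a32*b22 + a33*b32, a30*b03 + a31*b13 + a32*b23 + a33*b33] := by
  ext i j
  fin_cases i <;> fin_cases j <;>
    simp [Matrix.mul_apply, Fin.sum_univ_four, Matrix.vecHead, Matrix.vecTail]


lemma of_inj {m n α : Type*} {f g : m → n → α} :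
    (Matrix.of f = Matrix.of g) ↔ f = g := Equiv.apply_eq_iff_eq _

lemma cons_eq_cons {n : ℕ} {α : Type*} {a b : α} {u v : Fin n → α} :
    Matrix.vecCons a u = Matrix.vecCons b v ↔ a = b ∧ u = v :=
  ⟨fun h => ⟨congrFun h 0, funext fun i => congrFun h i.succ⟩,
   fun ⟨h1, h2⟩ => by rw [h1, h2]⟩

set_option maxHeartbeats 2000000 in
/-- The general singlet-boundary K-matrix satisfies the rational reflection
equation. -/
theorem stmt7 (u v a b c : ℂ) (hcu : c ≠ u) (hcv : c ≠ v)
    (h1 : u - v ≠ 1) (h2 : u + v ≠ 1) :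
    Rr (u - v) * kron2 (Kr a b c u) 1 * Rr (u + v) * kron2 1 (Kr a b c v) =
      kron2 1 (Kr a b c v) * Rr (u + v) * kron2 (Kr a b c u) 1 * Rr (u - v) := by
  have hcu' : c - u ≠ 0 := sub_ne_zero.mpr hcu
  have hcv' : c - v ≠ 0 := sub_ne_zero.mpr hcv
  have h1' : u - v - 1 ≠ 0 := sub_ne_zero.mpr h1
  have h2' : u + v - 1 ≠ 0 := sub_ne_zero.mpr h2
  rw [Rr_eq _ h1', Rr_eq _ h2', kron1 a b c u hcu', kron1' a b c v hcv']
  simp only [Matrix.smul_mul, Matrix.mul_smul, smul_smul]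
  rw [show (u - v - 1)⁻¹ * ((c - u)⁻¹ * ((u + v - 1)⁻¹ * (c - v)⁻¹)) =
      (c - v)⁻¹ * ((u + v - 1)⁻¹ * ((c - u)⁻¹ * (u - v - 1)⁻¹)) by ring]
  congr 1
  rw [mul_fin_four, mul_fin_four, mul_fin_four, mul_fin_four, mul_fin_four, mul_fin_four]
  simp only [of_inj, cons_eq_cons, and_true]
  and_intros <;> ring
end

section
/- Let u, t ∈ ℂ with t ≠ u. Define the 2×2 matrices H = diag(1, −1), M⁺(x) = (x + t)·E₁₂ and M⁻(x) = (x − t)·E₂₁. Then a 2×2 complex matrix K satisfies H·K = K·H, M⁺(−u)·K = K·M⁺(u), and M⁻(−u)·K = K·M⁻(u) if and only if K is a complex scalar multiple of diag(1, (t+u)/(t−u)). -/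
open Matrix

/-- The represented Cartan generator `H = diag(1, −1)`. -/
noncomputable def Hm : Matrix (Fin 2) (Fin 2) ℂ := !![1, 0; 0, -1]

/-- `M⁺(x) = (x + t)·E₁₂`, the represented twisted Yangian generator `Ẽ⁺`. -/
noncomputable def Mpy (t x : ℂ) : Matrix (Fin 2) (Fin 2) ℂ := (x + t) • !![0, 1; 0, 0]

/-- `M⁻(x) = (x − t)·E₂₁`, the represented twisted Yangian generator `Ẽ⁻`. -/
noncomputable def Mmy (t x : ℂ) : Matrix (Fin 2) (Fin 2) ℂ := (x - t) • !![0, 0; 1, 0]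

/-- A 2×2 matrix intertwines the generators of the type-I twisted Yangian of
`Y(sl2)` iff it is a scalar multiple of `diag(1, (t+u)/(t−u))`. -/
theorem stmt9 (u t : ℂ) (htu : t ≠ u) (K : Matrix (Fin 2) (Fin 2) ℂ) :
    (Hm * K = K * Hm ∧ Mpy t (-u) * K = K * Mpy t u ∧
        Mmy t (-u) * K = K * Mmy t u) ↔
      ∃ lam : ℂ, K = lam • !![1, 0; 0, (t + u) / (t - u)] := by
  have hsub : t - u ≠ 0 := sub_ne_zero.mpr htu
  constructor
  · rintro ⟨h1, h2, h3⟩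
    have e200 := congrFun (congrFun h2 0) 0
    have e201 := congrFun (congrFun h2 0) 1
    have e300 := congrFun (congrFun h3 0) 0
    simp [Mpy, Mmy, mul_apply, Fin.sum_univ_two] at e200 e201 e300
    have h10 : K 1 0 = 0 := by
      rcases e200 with h | h
      · exact absurd (by linear_combination h) hsub
      · exact h
    have h01 : K 0 1 = 0 := by
      rcases e300 with h | h
      · exact h
      · exact absurd (by linear_combination -h) hsub
    have h11 : K 1 1 = (t + u) / (t - u) * K 0 0 := by
      field_simp
      linear_combination e201
    refine ⟨K 0 0, ?_⟩
    ext i j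
    fin_cases i <;> fin_cases j <;>
      simp [h10, h01, h11, mul_comm]
  · rintro ⟨lam, rfl⟩
    refine ⟨?_, ?_, ?_⟩ <;>
    · ext i j
      fin_cases i <;> fin_cases j <;>
        · simp [Hm, Mpy, Mmy, mul_apply, Fin.sum_univ_two]
          try field_simp
          try ring
end

section
/- Let u, s ∈ ℂ with s² ≠ (u−1)². Define the 4×4 matrix M(x) = α(x)·E₁₂ + β(x)·E₁₃ + γ(x)·E₂₄ + δ(x)·E₃₄ with α(x) = s² − x − 3/4, β(x) = (2x+1)²/4, γ(x) = (2x−1)²/4, and δ(x) = s² + x − 3/4. Then for k ∈ ℂ the matrix K = I₄ + k·(−E₂₂ + E₂₃ + E₃₂ − E₃₃) satisfies M(−u)·K = K·M(u) if and only if k = 2u/(s² − (u−1)²). -/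
open Matrix

/-- The represented coproduct of the level-two twisted Yangian generator of
`Y(sl(2), sl(2))` at `t = −2`. -/
noncomputable def Mty (s x : ℂ) : Matrix (Fin 4) (Fin 4) ℂ :=
  !![0, s ^ 2 - x - 3 / 4, (2 * x + 1) ^ 2 / 4, 0;
     0, 0, 0, (2 * x - 1) ^ 2 / 4;
     0, 0, 0, s ^ 2 + x - 3 / 4;
     0, 0, 0, 0]

/-- The K-matrix `I₄ + k·(−E₂₂ + E₂₃ + E₃₂ − E₃₃)` intertwines the level-two
twisted Yangian generator iff `k = 2u/(s² − (u−1)²)`. -/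
theorem stmt11 (u s k : ℂ) (hs : s ^ 2 ≠ (u - 1) ^ 2) :
    Mty s (-u) * (1 + k • !![0, 0, 0, 0; 0, -1, 1, 0; 0, 1, -1, 0; 0, 0, 0, 0]) =
      (1 + k • !![0, 0, 0, 0; 0, -1, 1, 0; 0, 1, -1, 0; 0, 0, 0, 0]) * Mty s u ↔
      k = 2 * u / (s ^ 2 - (u - 1) ^ 2) := by
  have hne : s ^ 2 - (u - 1) ^ 2 ≠ 0 := sub_ne_zero.mpr hs
  rw [eq_div_iff hne]
  constructor
  · intro h
    have h01 := congrFun (congrFun h 0) 1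
    simp [Mty, Matrix.mul_apply, Fin.sum_univ_four, Matrix.one_apply] at h01
    linear_combination (-1 : ℂ) * h01
  · intro hk
    ext i j
    fin_cases i <;> fin_cases j <;>
      simp [Mty, Matrix.mul_apply, Fin.sum_univ_four, Matrix.one_apply, Matrix.vecHead,
        Matrix.vecTail] <;>
      first | linear_combination hk | linear_combination 2 * hk | linear_combination -hk
end

section
/- Let q, z, c ∈ ℂ with q ≠ 0, q² ≠ 1, z ≠ 0 and c ≠ z. Define the 2×2 matrices D = diag(q, q⁻¹), M⁺(x) = (x − c)·E₂₁ and M⁻(x) = (x⁻¹ − c)·E₁₂. Then a 2×2 complex matrix K satisfies D·K = K·D, M⁺(1/z)·K = K·M⁺(z), and M⁻(1/z)·K = K·M⁻(z) if and only if K is a complex scalar multiple of diag(1, (cz−1)/(z(c−z))). -/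
open Matrix

/-- `diag(q, q⁻¹)`, the image of the Cartan element `k₂` of `U_q(gl(1|1)hat)`. -/
noncomputable def Dgl (q : ℂ) : Matrix (Fin 2) (Fin 2) ℂ := !![q, 0; 0, q⁻¹]

/-- `M⁺(x) = (x − c)·E₂₁`. -/
noncomputable def Mpg (c x : ℂ) : Matrix (Fin 2) (Fin 2) ℂ := (x - c) • !![0, 0; 1, 0]

/-- `M⁻(x) = (x⁻¹ − c)·E₁₂`. -/
noncomputable def Mmg (c x : ℂ) : Matrix (Fin 2) (Fin 2) ℂ := (x⁻¹ - c) • !![0, 1; 0, 0]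

/-- A 2×2 matrix intertwines the generators of the singlet-boundary coideal
subalgebra of `U_q(gl(1|1)hat)` iff it is a scalar multiple of
`diag(1, (cz−1)/(z(c−z)))`. -/
theorem stmt15 (q z c : ℂ) (hq : q ≠ 0) (hq2 : q ^ 2 ≠ 1) (hz : z ≠ 0) (hc : c ≠ z)
    (K : Matrix (Fin 2) (Fin 2) ℂ) :
    (Dgl q * K = K * Dgl q ∧ Mpg c (1 / z) * K = K * Mpg c z ∧
        Mmg c (1 / z) * K = K * Mmg c z) ↔
      ∃ lam : ℂ, K = lam • !![1, 0; 0, (c * z - 1) / (z * (c - z))] := by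
  have hcz : c - z ≠ 0 := sub_ne_zero.mpr hc
  have hq2' : q ^ 2 - 1 ≠ 0 := sub_ne_zero.mpr hq2
  constructor
  · rintro ⟨h1, h2, h3⟩
    have e01 := congrFun (congrFun h1 0) 1
    have e10 := congrFun (congrFun h1 1) 0
    have p10 := congrFun (congrFun h2 1) 0
    simp [Dgl, Mpg, Matrix.mul_apply, Fin.sum_univ_two] at e01 e10 p10
    have hb : K 0 1 = 0 := by
      have h : K 0 1 * (q ^ 2 - 1) = 0 := by
        field_simp at e01
        linear_combination e01
      exact (mul_eq_zero.mp h).resolve_right hq2'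
    have hd : K 1 0 = 0 := by
      have h : K 1 0 * (q ^ 2 - 1) = 0 := by
        field_simp at e10
        linear_combination -e10
      exact (mul_eq_zero.mp h).resolve_right hq2'
    have he : K 1 1 = K 0 0 * ((c * z - 1) / (z * (c - z))) := by
      field_simp at p10 ⊢
      linear_combination p10
    refine ⟨K 0 0, ?_⟩
    ext i j
    fin_cases i <;> fin_cases j <;> simp [hb, hd, he]
  · rintro ⟨lam, rfl⟩
    have hzcz : z * c - z ^ 2 ≠ 0 := by
      intro h0
      exact mul_ne_zero hz hcz (by linear_combination h0)
    refine ⟨?_, ?_, ?_⟩ <;>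
      · ext i j
        fin_cases i <;> fin_cases j <;>
          simp [Dgl, Mpg, Mmg, Matrix.mul_apply, Fin.sum_univ_two] <;>
          first
          | tauto
          | ring1
          | (field_simp; ring1)
end

section
/- Let q ∈ ℂ with q ≠ 0 and q⁴ ≠ 1. A 4×4 complex matrix K commutes with all three matrices diag(q², 1, 1, q⁻²), q·E₁₂ + E₁₃ + E₂₄ − q·E₃₄, and E₂₁ + q⁻¹·E₃₁ + q⁻¹·E₄₂ − E₄₃ if and only if K = a·I₄ + k·(−q⁻¹·E₂₂ + E₂₃ + E₃₂ − q·E₃₃ − (q+q⁻¹)·E₄₄) for some a, k ∈ ℂ. -/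
open Matrix

set_option maxHeartbeats 1600000

/-- A 4×4 matrix commutes with the represented coproducts of the generators
`k₂, ξ₁⁺, ξ₁⁻` of `U_q(gl(1|1)hat)` iff it has the stated two-parameter form. -/
theorem stmt16 (q : ℂ) (hq : q ≠ 0) (hq4 : q ^ 4 ≠ 1)
    (K : Matrix (Fin 4) (Fin 4) ℂ) :
    (K * !![q ^ 2, 0, 0, 0; 0, 1, 0, 0; 0, 0, 1, 0; 0, 0, 0, (q ^ 2)⁻¹] =
        !![q ^ 2, 0, 0, 0; 0, 1, 0, 0; 0, 0, 1, 0; 0, 0, 0, (q ^ 2)⁻¹] * K ∧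
      K * !![0, q, 1, 0; 0, 0, 0, 1; 0, 0, 0, -q; 0, 0, 0, 0] =
        !![0, q, 1, 0; 0, 0, 0, 1; 0, 0, 0, -q; 0, 0, 0, 0] * K ∧
      K * !![0, 0, 0, 0; 1, 0, 0, 0; q⁻¹, 0, 0, 0; 0, q⁻¹, -1, 0] =
        !![0, 0, 0, 0; 1, 0, 0, 0; q⁻¹, 0, 0, 0; 0, q⁻¹, -1, 0] * K) ↔
      ∃ a k : ℂ, K = a • (1 : Matrix (Fin 4) (Fin 4) ℂ) +
        k • !![0, 0, 0, 0; 0, -q⁻¹, 1, 0; 0, 1, -q, 0; 0, 0, 0, -(q + q⁻¹)] := by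
  have hinv : q ^ 2 * (q ^ 2)⁻¹ = 1 := mul_inv_cancel₀ (pow_ne_zero 2 hq)
  have hinv1 : q * q⁻¹ = 1 := mul_inv_cancel₀ hq
  have hq2 : q ^ 2 - 1 ≠ 0 := by
    intro h
    apply hq4
    have h2 : q ^ 2 = 1 := by linear_combination h
    calc q ^ 4 = (q ^ 2) ^ 2 := by ring
    _ = 1 := by rw [h2]; ring
  have hq4' : q ^ 4 - 1 ≠ 0 := sub_ne_zero.mpr hq4
  have one4 : (1 : Matrix (Fin 4) (Fin 4) ℂ) =
      !![1,0,0,0; 0,1,0,0; 0,0,1,0; 0,0,0,1] := by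
    ext i j; fin_cases i <;> fin_cases j <;> rfl
  constructor
  · rintro ⟨h1, h2, h3⟩
    rw [← Matrix.ext_iff] at h1 h2 h3
    have e01 := h1 0 1; have e02 := h1 0 2; have e03 := h1 0 3
    have e10 := h1 1 0; have e20 := h1 2 0; have e30 := h1 3 0
    have e13 := h1 1 3; have e23 := h1 2 3; have e31 := h1 3 1; have e32 := h1 3 2
    have r1 := h3 1 0
    have r2 := h2 0 1
    have r3 := h2 0 2
    have r4 := h2 1 3
    simp [Matrix.mul_apply, Fin.sum_univ_four, Matrix.vecHead, Matrix.vecTail] at e01 e02 e03 e10 e20 e30 e13 e23 e31 e32 r1 r2 r3 r4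
    have z01 : K 0 1 = 0 :=
      (mul_eq_zero.mp (show K 0 1 * (q ^ 2 - 1) = 0 by linear_combination -e01)).resolve_right hq2
    have z02 : K 0 2 = 0 :=
      (mul_eq_zero.mp (show K 0 2 * (q ^ 2 - 1) = 0 by linear_combination -e02)).resolve_right hq2
    have z10 : K 1 0 = 0 :=
      (mul_eq_zero.mp (show K 1 0 * (q ^ 2 - 1) = 0 by linear_combination e10)).resolve_right hq2
    have z20 : K 2 0 = 0 :=
      (mul_eq_zero.mp (show K 2 0 * (q ^ 2 - 1) = 0 by linear_combination e20)).resolve_right hq2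
    have z03 : K 0 3 = 0 :=
      (mul_eq_zero.mp (show K 0 3 * (q ^ 4 - 1) = 0 by
        linear_combination (-(q ^ 2)) * e03 + K 0 3 * hinv)).resolve_right hq4'
    have z30 : K 3 0 = 0 :=
      (mul_eq_zero.mp (show K 3 0 * (q ^ 4 - 1) = 0 by
        linear_combination q ^ 2 * e30 + K 3 0 * hinv)).resolve_right hq4'
    have z13 : K 1 3 = 0 :=
      (mul_eq_zero.mp (show K 1 3 * (q ^ 2 - 1) = 0 by
        linear_combination (-(q ^ 2)) * e13 + K 1 3 * hinv)).resolve_right hq2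
    have z23 : K 2 3 = 0 :=
      (mul_eq_zero.mp (show K 2 3 * (q ^ 2 - 1) = 0 by
        linear_combination (-(q ^ 2)) * e23 + K 2 3 * hinv)).resolve_right hq2
    have z31 : K 3 1 = 0 :=
      (mul_eq_zero.mp (show K 3 1 * (q ^ 2 - 1) = 0 by
        linear_combination q ^ 2 * e31 + K 3 1 * hinv)).resolve_right hq2
    have z32 : K 3 2 = 0 :=
      (mul_eq_zero.mp (show K 3 2 * (q ^ 2 - 1) = 0 by
        linear_combination q ^ 2 * e32 + K 3 2 * hinv)).resolve_right hq2
    have g11 : K 1 1 = K 0 0 - q⁻¹ * K 1 2 := by linear_combination r1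
    have g21 : K 2 1 = K 1 2 := by
      linear_combination -r2 - q * r1 + K 1 2 * hinv1
    have g22 : K 2 2 = K 0 0 - q * K 1 2 := by linear_combination -r3
    have g33 : K 3 3 = K 0 0 - (q + q⁻¹) * K 1 2 := by linear_combination r1 - r4
    refine ⟨K 0 0, K 1 2, ?_⟩
    rw [one4]
    ext i j
    fin_cases i <;> fin_cases j <;>
      (simp [Matrix.add_apply, Matrix.smul_apply, Matrix.vecHead, Matrix.vecTail,
        z01, z02, z03, z10, z20, z30, z13, z23, z31, z32, g11, g21, g22, g33] ;
       try ring)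
  · rintro ⟨a, k, rfl⟩
    rw [one4]
    refine ⟨?_, ?_, ?_⟩ <;>
      · ext i j
        fin_cases i <;> fin_cases j <;>
          (simp [Matrix.mul_apply, Fin.sum_univ_four, Matrix.add_apply, Matrix.smul_apply,
            Matrix.vecHead, Matrix.vecTail] ;
           try field_simp ;
           try ring ;
           try exact Or.inl trivial)
end

section
/- Let q, z, s ∈ ℂ with q ≠ 0, q² ≠ 1, z ≠ 0, s ≠ 0, and D := q⁻² − (s + s⁻¹)z + q²z² ≠ 0. Define the 4×4 matrix M(x) = a(x)·(E₁₂ − E₃₄) + b(x)·(E₁₃ + E₂₄) with a(x) = (q⁻² − 1)x − s − s⁻¹ and b(x) = −(q·x⁻¹ + q⁻¹·x). Then for k ∈ ℂ the matrix K = I₄ + k·(−q⁻¹·E₂₂ + E₂₃ + E₃₂ − q·E₃₃ − (q+q⁻¹)·E₄₄) satisfies M(1/z)·K = K·M(z) if and only if k = (q − q⁻¹)(z² − 1)/D. -/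
open Matrix

/-- The represented coproduct of the twisted affine generator `B₀⁻` of the
vector-boundary coideal subalgebra of `U_q(gl(1|1)hat)`:
`M(x) = a(x)·(E₁₂ − E₃₄) + b(x)·(E₁₃ + E₂₄)`. -/
noncomputable def Mtg (q s x : ℂ) : Matrix (Fin 4) (Fin 4) ℂ :=
  !![0, ((q ^ 2)⁻¹ - 1) * x - s - s⁻¹, -(q * x⁻¹ + q⁻¹ * x), 0;
     0, 0, 0, -(q * x⁻¹ + q⁻¹ * x);
     0, 0, 0, -(((q ^ 2)⁻¹ - 1) * x - s - s⁻¹);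
     0, 0, 0, 0]

set_option maxHeartbeats 2000000 in
/-- The K-matrix `I₄ + k·(−q⁻¹E₂₂ + E₂₃ + E₃₂ − qE₃₃ − (q+q⁻¹)E₄₄)` intertwines
the twisted affine generator iff `k = (q−q⁻¹)(z²−1)/D`. -/
theorem stmt17 (q z s k : ℂ) (hq : q ≠ 0) (hq2 : q ^ 2 ≠ 1) (hz : z ≠ 0) (hs : s ≠ 0)
    (hD : (q ^ 2)⁻¹ - (s + s⁻¹) * z + q ^ 2 * z ^ 2 ≠ 0) :
    Mtg q s (1 / z) *
        (1 + k • !![0, 0, 0, 0; 0, -q⁻¹, 1, 0; 0, 1, -q, 0; 0, 0, 0, -(q + q⁻¹)]) =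
      (1 + k • !![0, 0, 0, 0; 0, -q⁻¹, 1, 0; 0, 1, -q, 0; 0, 0, 0, -(q + q⁻¹)]) *
        Mtg q s z ↔
      k = (q - q⁻¹) * (z ^ 2 - 1) /
        ((q ^ 2)⁻¹ - (s + s⁻¹) * z + q ^ 2 * z ^ 2) := by
  have hz1 : z * z⁻¹ = 1 := mul_inv_cancel₀ hz
  have hq1 : q * q⁻¹ = 1 := mul_inv_cancel₀ hq
  have hs1 : s * s⁻¹ = 1 := mul_inv_cancel₀ hs
  have hQT : q⁻¹ = q * (q ^ 2)⁻¹ := by field_simp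
  constructor
  · intro h
    have h01 := congr_fun (congr_fun h 0) 1
    simp [Mtg, Matrix.mul_apply, Fin.sum_univ_four, Matrix.one_apply] at h01
    rw [eq_div_iff hD]
    linear_combination (-(q*z))*h01 + (q*(q^2)⁻¹ - q - k*(q^2)⁻¹)*hz1
      + (-(z*k*z⁻¹*(q^2)⁻¹) + z*s*k + z*k*s⁻¹)*hq1 + (z^2-1)*hQT
  · intro hk
    have hk2 : k * (s - (s^2+1)*z*q^2 + q^4*z^2*s) = (q^3-q)*(z^2-1)*s := by
      rw [hk, div_mul_eq_mul_div, div_eq_iff hD]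
      field_simp
    ext i j
    fin_cases i <;> fin_cases j <;>
      simp [Mtg, Matrix.mul_apply, Fin.sum_univ_four, Matrix.one_apply,
        Matrix.vecHead, Matrix.vecTail] <;>
      first
      | linear_combination ( - q⁻¹^3*z⁻¹*s⁻¹)*hk2 + (s*z⁻¹*s⁻¹ - s*q⁻¹^2*z⁻¹*s⁻¹ - z*k*q⁻¹*z⁻¹*s⁻¹ - z*s^2*k*q⁻¹*z⁻¹*s⁻¹ - z^2*s*z⁻¹*s⁻¹ + z^2*s*q⁻¹^2*z⁻¹*s⁻¹ + q*s*q⁻¹*z⁻¹*s⁻¹ - q*z*k*q⁻¹^2*z⁻¹*s⁻¹ - q*z*s^2*k*q⁻¹^2*z⁻¹*s⁻¹ - q*z^2*s*q⁻¹*z⁻¹*s⁻¹ + q*z^2*s*k*z⁻¹*s⁻¹ + q^2*s*q⁻¹^2*z⁻¹*s⁻¹ - q^2*z^2*s*q⁻¹^2*z⁻¹*s⁻¹ + q^2*z^2*s*k*q⁻¹*z⁻¹*s⁻¹ + q^3*z^2*s*k*q⁻¹^2*z⁻¹*s⁻¹)*hq1 + ( - k*q⁻¹*s⁻¹ - s^2*k*q⁻¹*s⁻¹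 - z*s*s⁻¹ + z*s*q⁻¹^2*s⁻¹ + q*z*s*k*s⁻¹)*hz1 + (z⁻¹ - q⁻¹^2*z⁻¹ + k*q⁻¹^3*z⁻¹ - s*k*q⁻¹ - z + z*q⁻¹^2 + q*z*k)*hs1
      | linear_combination (q⁻¹^2*z⁻¹*s⁻¹)*hk2 + (k*z⁻¹ + s*q⁻¹*z⁻¹*s⁻¹ + z*k*z⁻¹*s⁻¹ + z*s^2*k*z⁻¹*s⁻¹ - z^2*s*q⁻¹*z⁻¹*s⁻¹ - q*s*z⁻¹*s⁻¹ + q*z*k*q⁻¹*z⁻¹*s⁻¹ + q*z*s^2*k*q⁻¹*z⁻¹*s⁻¹ + q*z^2*s*z⁻¹*s⁻¹ - q^2*s*q⁻¹*z⁻¹*s⁻¹ + q^2*z^2*s*q⁻¹*z⁻¹*s⁻¹ - q^2*z^2*s*k*z⁻¹*s⁻¹ - q^3*z^2*s*k*q⁻¹*z⁻¹*s⁻¹)*hq1 + (k*s⁻¹ + s^2*k*s⁻¹ - z*s*q⁻¹*s⁻¹ + q*z*s*s⁻¹ - q^2*z*s*k*s⁻¹)*hz1 + (q⁻¹*z⁻¹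 - k*q⁻¹^2*z⁻¹ + s*k - z*q⁻¹ - q*z⁻¹ + q*z - q^2*z*k)*hs1
      | linear_combination (q⁻¹^2*z⁻¹*s⁻¹)*hk2 + (s*q⁻¹*z⁻¹*s⁻¹ + z*k + z*k*z⁻¹*s⁻¹ + z*s^2*k*z⁻¹*s⁻¹ - z^2*s*q⁻¹*z⁻¹*s⁻¹ - q*s*z⁻¹*s⁻¹ + q*z*k*q⁻¹*z⁻¹*s⁻¹ + q*z*s^2*k*q⁻¹*z⁻¹*s⁻¹ + q*z^2*s*z⁻¹*s⁻¹ - q^2*s*q⁻¹*z⁻¹*s⁻¹ + q^2*z^2*s*q⁻¹*z⁻¹*s⁻¹ - q^2*z^2*s*k*z⁻¹*s⁻¹ - q^3*z^2*s*k*q⁻¹*z⁻¹*s⁻¹)*hq1 + (k*s⁻¹ + s^2*k*s⁻¹ - z*s*q⁻¹*s⁻¹ + q*z*s*s⁻¹ - q^2*z*s*k*s⁻¹)*hz1 + (q⁻¹*z⁻¹ - k*q⁻¹^2*z⁻¹ + s*k - z*q⁻¹ - q*z⁻¹ + q*z - q^2*z*k)*hs1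
      | linear_combination (q⁻¹^3*z⁻¹*s⁻¹)*hk2 + (k*q⁻¹*z⁻¹ - s*z⁻¹*s⁻¹ + s*q⁻¹^2*z⁻¹*s⁻¹ - z*k*q⁻¹ + z*k*q⁻¹*z⁻¹*s⁻¹ + z*s^2*k*q⁻¹*z⁻¹*s⁻¹ + z^2*s*z⁻¹*s⁻¹ - z^2*s*q⁻¹^2*z⁻¹*s⁻¹ - q*s*q⁻¹*z⁻¹*s⁻¹ + q*z*k*q⁻¹^2*z⁻¹*s⁻¹ + q*z*s^2*k*q⁻¹^2*z⁻¹*s⁻¹ + q*z^2*s*q⁻¹*z⁻¹*s⁻¹ - q*z^2*s*k*z⁻¹*s⁻¹ - q^2*s*q⁻¹^2*z⁻¹*s⁻¹ + q^2*z^2*s*q⁻¹^2*z⁻¹*s⁻¹ - q^2*z^2*s*k*q⁻¹*z⁻¹*s⁻¹ - q^3*z^2*s*k*q⁻¹^2*z⁻¹*s⁻¹)*hq1 + (k*q⁻¹*s⁻¹ + s^2*k*q⁻¹*s⁻¹ + z*s*s⁻¹ - z*s*q⁻¹^2*s⁻¹ - q*z*s*k*s⁻¹)*hz1 + ( - z⁻¹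 + q⁻¹^2*z⁻¹ - k*q⁻¹^3*z⁻¹ + s*k*q⁻¹ + z - z*q⁻¹^2 - q*z*k)*hs1
end
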